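/- Vertical-flip near-invariance of the Funnel bound: for any finite point set P with distinct x- and y-coordinates of size m, Funnel(P) ≥ Funnel(rev(P)) − O(m), where rev(P) = {(x,−y) : (x,y) ∈ P}; concretely, Funnel(P) ≥ Funnel(rev(P)) − 4m. -/

import Mathlib

/-- Number of maximal blocks of equal symbols in a string over `{L,R}` (as `Bool`s). -/
def blocks : List Bool → ℕ
  | [] => 0
  | [_] => 1
  | a :: b :: l => (if a = b then 0 else 1) + blocks (b :: l)

/-- The labeled merge of two finite sets of reals: sort `L ∪ R` increasingly and
label each element by whether it came from `L` (`true`) or not. -/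
noncomputable def mix (L R : Finset ℝ) : List Bool :=
  ((L ∪ R).sort (· ≤ ·)).map (fun x => decide (x ∈ L))

/-- `mixValue L R` is the number of maximal same-origin blocks in the merged sorted sequence. -/
noncomputable def mixValue (L R : Finset ℝ) : ℕ := blocks (mix L R)
/-- Membership in the minimal axis-aligned rectangle spanned by `p` and `q`. -/
def inRect (p q t : ℝ × ℝ) : Prop :=
  min p.1 q.1 ≤ t.1 ∧ t.1 ≤ max p.1 q.1 ∧ min p.2 q.2 ≤ t.2 ∧ t.2 ≤ max p.2 q.2

noncomputable instance (p q t : ℝ × ℝ) : Decidable (inRect p q t) := by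
  unfold inRect; infer_instance

/-- The left funnel of `p` within `P`. -/
noncomputable def FL (P : Finset (ℝ × ℝ)) (p : ℝ × ℝ) : Finset (ℝ × ℝ) :=
  P.filter (fun q => q.2 < p.2 ∧ q.1 < p.1 ∧ ∀ t ∈ P, inRect p q t → t = p ∨ t = q)

/-- The right funnel of `p` within `P`. -/
noncomputable def FR (P : Finset (ℝ × ℝ)) (p : ℝ × ℝ) : Finset (ℝ × ℝ) :=
  P.filter (fun q => q.2 < p.2 ∧ q.1 > p.1 ∧ ∀ t ∈ P, inRect p q t → t = p ∨ t = q)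

/-- The funnel contribution `f(P,p)`. -/
noncomputable def fContrib (P : Finset (ℝ × ℝ)) (p : ℝ × ℝ) : ℕ :=
  mixValue ((FL P p).image Prod.snd) ((FR P p).image Prod.snd)

/-- Wilber's Funnel bound. -/
noncomputable def Funnel (P : Finset (ℝ × ℝ)) : ℕ := ∑ p ∈ P, fContrib P p

/-- All points of `P` have distinct `y`-coordinates. -/
def DistinctY (P : Finset (ℝ × ℝ)) : Prop :=
  ∀ p ∈ P, ∀ q ∈ P, p.2 = q.2 → p = q

/-- All points of `P` have distinct `x`-coordinates. -/
def DistinctX (P : Finset (ℝ × ℝ)) : Prop :=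
  ∀ p ∈ P, ∀ q ∈ P, p.1 = q.1 → p = q
/-- `(p,q,r,s)` is a z-rectangle of `P`. -/
def IsZRect (P : Finset (ℝ × ℝ)) (p q r s : ℝ × ℝ) : Prop :=
  p ∈ P ∧ q ∈ P ∧ r ∈ P ∧ s ∈ P ∧
  q.1 < p.1 ∧ p.1 < r.1 ∧ r.1 < s.1 ∧
  r.2 < q.2 ∧ q.2 < s.2 ∧ s.2 < p.2 ∧
  ∀ t ∈ P, q.1 ≤ t.1 → t.1 ≤ s.1 → r.2 ≤ t.2 → t.2 ≤ p.2 →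
    (t = p ∨ t = q ∨ t = r ∨ t = s)

noncomputable instance (P : Finset (ℝ × ℝ)) (p q r s : ℝ × ℝ) : Decidable (IsZRect P p q r s) := by
  unfold IsZRect; infer_instance

/-- The number of z-rectangles of `P`. -/
noncomputable def zRects (P : Finset (ℝ × ℝ)) : ℕ :=
  ((P ×ˢ P ×ˢ P ×ˢ P).filter
    (fun t => IsZRect P t.1 t.2.1 t.2.2.1 t.2.2.2)).card


namespace FP

def chg : List Bool → ℕ
  | [] => 0
  | [_] => 0
  | a :: b :: l => (if a = b then 0 else 1) + chg (b :: l)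

lemma blocks_eq_chg : ∀ l : List Bool, blocks l = chg l + (if l = [] then 0 else 1)
  | [] => by simp [blocks, chg]
  | [a] => by simp [blocks, chg]
  | a :: b :: t => by
    have := blocks_eq_chg (b :: t)
    simp only [blocks, chg, this]
    simp
    ring

lemma blocks_map_not : ∀ l : List Bool, blocks (l.map (fun b => !b)) = blocks l
  | [] => by simp [blocks]
  | [a] => by simp [blocks]
  | a :: b :: t => by
    have := blocks_map_not (b :: t)
    simp only [List.map, blocks] at this ⊢
    rw [this]
    congr 1
    by_cases h : a = b <;> simp [h]

open Finset in
noncomputable def adjPairs (f : ℝ → Bool) (U : Finset ℝ) : Finset (ℝ × ℝ) :=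
  (U ×ˢ U).filter (fun ab => ab.1 < ab.2 ∧ f ab.1 ≠ f ab.2 ∧ ∀ c ∈ U, ¬(ab.1 < c ∧ c < ab.2))

lemma chg_sorted (f : ℝ → Bool) :
    ∀ l : List ℝ, l.Pairwise (· < ·) → chg (l.map f) = (adjPairs f l.toFinset).card
  | [] , _ => by
    simp [chg, adjPairs]
  | [x], _ => by
    have h0 : adjPairs f ({x} : Finset ℝ) = ∅ := by
      ext ⟨a, b⟩
      simp only [adjPairs, Finset.mem_filter, Finset.mem_product, Finset.mem_singleton,
        Finset.notMem_empty, iff_false]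
      rintro ⟨⟨rfl, rfl⟩, h, -⟩
      exact lt_irrefl _ h
    have h1 : ([x] : List ℝ).toFinset = {x} := by simp
    rw [h1, h0]
    simp [chg]
  | x :: y :: t, hs => by
    have hxy : x < y := (List.pairwise_cons.1 hs).1 y (by simp)
    have hxall : ∀ u ∈ (y :: t).toFinset, x < u := by
      intro u hu
      exact (List.pairwise_cons.1 hs).1 u (by simpa using hu)
    have hyall : ∀ u ∈ (y :: t).toFinset, u = y ∨ y < u := by
      intro u hu
      simp only [List.mem_toFinset, List.mem_cons] at hu
      rcases hu with rfl | hu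
      · exact Or.inl rfl
      · exact Or.inr ((List.pairwise_cons.1 (List.pairwise_cons.1 hs).2).1 u hu)
    have hxnot : x ∉ (y :: t).toFinset := fun hx => lt_irrefl x (hxall x hx)
    have hU : (x :: y :: t).toFinset = insert x (y :: t).toFinset := by simp
    -- the two directions as standalone facts
    have dir1 : ∀ a b : ℝ, (a, b) ∈ adjPairs f (insert x (y :: t).toFinset) →
        (a = x ∧ b = y ∧ f x ≠ f y) ∨ (a, b) ∈ adjPairs f (y :: t).toFinset := by
      intro a b hmem
      obtain ⟨hprod, hab, hfab, hbet⟩ := Finset.mem_filter.1 hmem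
      obtain ⟨ha, hb⟩ := Finset.mem_product.1 hprod
      dsimp only at hab hfab hbet ha hb
      rw [Finset.mem_insert] at ha hb
      have hbx : b ≠ x := by
        rintro rfl
        rcases ha with rfl | ha
        · exact lt_irrefl _ hab
        · exact lt_irrefl _ (lt_trans (hxall a ha) hab)
      rcases ha with rfl | ha
      · left
        rcases hb with rfl | hb
        · exact absurd rfl hbx
        · have hby : b = y := by
            rcases hyall b hb with rfl | hby
            · rfl
            · exact absurd ⟨hxy, hby⟩ (hbet y (Finset.mem_insert_of_mem (by simp)))
          subst hby
          exact ⟨rfl, rfl, hfab⟩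
      · right
        have hbU : b ∈ (y :: t).toFinset := by
          rcases hb with rfl | hb
          · exact absurd rfl hbx
          · exact hb
        refine Finset.mem_filter.2 ⟨Finset.mem_product.2 ⟨ha, hbU⟩, hab, hfab, ?_⟩
        intro c hc
        exact hbet c (Finset.mem_insert_of_mem hc)
    have dir2a : ∀ a b : ℝ, (a, b) ∈ adjPairs f (y :: t).toFinset →
        (a, b) ∈ adjPairs f (insert x (y :: t).toFinset) := by
      intro a b hmem
      obtain ⟨hprod, hab, hfab, hbet⟩ := Finset.mem_filter.1 hmem
      obtain ⟨ha, hb⟩ := Finset.mem_product.1 hprod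
      dsimp only at hab hfab hbet ha hb
      refine Finset.mem_filter.2 ⟨Finset.mem_product.2
        ⟨Finset.mem_insert_of_mem ha, Finset.mem_insert_of_mem hb⟩, hab, hfab, ?_⟩
      intro c hc
      rcases Finset.mem_insert.1 hc with rfl | hc
      · rintro ⟨h1, -⟩
        exact lt_irrefl c (lt_trans (hxall a ha) h1)
      · exact hbet c hc
    have dir2b : f x ≠ f y → (x, y) ∈ adjPairs f (insert x (y :: t).toFinset) := by
      intro hne
      refine Finset.mem_filter.2 ⟨Finset.mem_product.2
        ⟨Finset.mem_insert_self _ _, Finset.mem_insert_of_mem (by simp)⟩, hxy, hne, ?_⟩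
      intro c hc
      rcases Finset.mem_insert.1 hc with rfl | hc
      · rintro ⟨h1, -⟩; exact lt_irrefl c h1
      · rintro ⟨h1, h2⟩
        rcases hyall c hc with rfl | hy
        · exact lt_irrefl c h2
        · exact lt_irrefl c (lt_trans h2 hy)
    have hIH := chg_sorted f (y :: t) (List.pairwise_cons.1 hs).2
    have hxyP : (x, y) ∉ adjPairs f (y :: t).toFinset := by
      intro h
      obtain ⟨hm, -⟩ := Finset.mem_filter.1 h
      exact hxnot (Finset.mem_product.1 hm).1
    have hmapIH : chg (f y :: List.map f t) = (adjPairs f (y :: t).toFinset).card := by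
      simpa using hIH
    by_cases hfxy : f x = f y
    · have key : adjPairs f (insert x (y :: t).toFinset) = adjPairs f (y :: t).toFinset := by
        ext ⟨a, b⟩
        constructor
        · intro h
          rcases dir1 a b h with ⟨-, -, hne⟩ | h
          · exact absurd hfxy hne
          · exact h
        · exact dir2a a b
      rw [hU]
      simp only [List.map_cons, chg, key, if_pos hfxy, hmapIH, zero_add]
    · have key : adjPairs f (insert x (y :: t).toFinset) =
          insert (x, y) (adjPairs f (y :: t).toFinset) := by
        ext ⟨a, b⟩
        constructor
        · intro h
          rcases dir1 a b h with ⟨rfl, rfl, -⟩ | h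
          · exact Finset.mem_insert_self _ _
          · exact Finset.mem_insert_of_mem h
        · intro h
          rcases Finset.mem_insert.1 h with h | h
          · rw [Prod.ext_iff] at h
            obtain ⟨h1, h2⟩ := h
            simp only at h1 h2
            subst h1; subst h2
            exact dir2b hfxy
          · exact dir2a a b h
      rw [hU]
      simp only [List.map_cons, chg, key, if_neg hfxy,
        Finset.card_insert_of_notMem hxyP, hmapIH]
      ring

end FP

namespace FP

open Classical in
noncomputable def adjLR (L R : Finset ℝ) : Finset (ℝ × ℝ) :=
  ((L ∪ R) ×ˢ (L ∪ R)).filter (fun ab => ab.1 < ab.2 ∧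
    ((ab.1 ∈ L ∧ ab.2 ∈ R) ∨ (ab.1 ∈ R ∧ ab.2 ∈ L)) ∧
    ∀ c ∈ L ∪ R, ¬(ab.1 < c ∧ c < ab.2))

lemma mixValue_eq (L R : Finset ℝ) (hd : ∀ x, ¬(x ∈ L ∧ x ∈ R)) :
    mixValue L R = (if L ∪ R = ∅ then 0 else 1) + (adjLR L R).card := by
  classical
  have h1 : chg (mix L R) = (adjPairs (fun x => decide (x ∈ L)) (L ∪ R)).card := by
    have h := chg_sorted (fun x => decide (x ∈ L)) ((L ∪ R).sort (· ≤ ·))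
      (Finset.sortedLT_sort _).pairwise
    rwa [Finset.sort_toFinset] at h
  have h2 : adjPairs (fun x => decide (x ∈ L)) (L ∪ R) = adjLR L R := by
    unfold adjPairs adjLR
    apply Finset.filter_congr
    rintro ⟨a, b⟩ hab
    obtain ⟨ha, hb⟩ := Finset.mem_product.1 hab
    dsimp only
    constructor
    · rintro ⟨h1', h2', h3'⟩
      refine ⟨h1', ?_, h3'⟩
      by_cases haL : a ∈ L
      · have hbL : b ∉ L := by
          intro hbL; exact h2' (by simp [haL, hbL])
        have hbR : b ∈ R := (Finset.mem_union.1 hb).resolve_left hbL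
        exact Or.inl ⟨haL, hbR⟩
      · have haR : a ∈ R := (Finset.mem_union.1 ha).resolve_left haL
        have hbL : b ∈ L := by
          by_contra hbL
          exact h2' (by simp [haL, hbL])
        exact Or.inr ⟨haR, hbL⟩
    · rintro ⟨h1', h2', h3'⟩
      refine ⟨h1', ?_, h3'⟩
      rcases h2' with ⟨haL, hbR⟩ | ⟨haR, hbL⟩
      · have hbL : b ∉ L := fun hbL => hd b ⟨hbL, hbR⟩
        simp [haL, hbL]
      · have haL : a ∉ L := fun haL => hd a ⟨haL, haR⟩
        simp [haL, hbL]
  have h3 : (mix L R = []) ↔ (L ∪ R = ∅) := by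
    unfold mix
    rw [List.map_eq_nil_iff]
    constructor
    · intro h
      ext x
      simp only [Finset.notMem_empty, iff_false]
      intro hx
      have := (Finset.mem_sort (α := ℝ) (· ≤ ·)).2 hx
      rw [h] at this
      exact absurd this List.not_mem_nil
    · intro h
      rw [h]
      rcases List.eq_nil_or_concat ((∅ : Finset ℝ).sort (· ≤ ·)) with h' | ⟨l, x, h'⟩
      · exact h'
      · exfalso
        have : x ∈ (∅ : Finset ℝ).sort (· ≤ ·) := by rw [h']; simp
        simp [Finset.mem_sort] at this
  unfold mixValue
  rw [blocks_eq_chg, h1, h2]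
  by_cases he : L ∪ R = ∅
  · rw [if_pos he, if_pos (h3.2 he)]
    omega
  · rw [if_neg he, if_neg (fun hh => he (h3.1 hh))]
    omega

end FP


namespace FP

/-! ### Point-level transition sets -/

lemma mem_FL {P : Finset (ℝ × ℝ)} {p q : ℝ × ℝ} :
    q ∈ FL P p ↔ q ∈ P ∧ q.2 < p.2 ∧ q.1 < p.1 ∧
      ∀ t ∈ P, inRect p q t → t = p ∨ t = q := by
  simp [FL, Finset.mem_filter, and_assoc]

lemma mem_FR {P : Finset (ℝ × ℝ)} {p q : ℝ × ℝ} :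
    q ∈ FR P p ↔ q ∈ P ∧ q.2 < p.2 ∧ q.1 > p.1 ∧
      ∀ t ∈ P, inRect p q t → t = p ∨ t = q := by
  simp [FR, Finset.mem_filter, and_assoc]

/-- eliminate with the emptiness of the rectangle of a left-funnel point -/
lemma empL {P : Finset (ℝ × ℝ)} {p q t : ℝ × ℝ} (hq : q ∈ FL P p) (ht : t ∈ P)
    (h1 : q.1 ≤ t.1) (h2 : t.1 ≤ p.1) (h3 : q.2 ≤ t.2) (h4 : t.2 ≤ p.2) :
    t = p ∨ t = q := by
  obtain ⟨-, hy, hx, hemp⟩ := mem_FL.1 hq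
  exact hemp t ht ⟨by rw [min_eq_right hx.le]; exact h1,
    by rw [max_eq_left hx.le]; exact h2,
    by rw [min_eq_right hy.le]; exact h3,
    by rw [max_eq_left hy.le]; exact h4⟩

lemma empR {P : Finset (ℝ × ℝ)} {p q t : ℝ × ℝ} (hq : q ∈ FR P p) (ht : t ∈ P)
    (h1 : p.1 ≤ t.1) (h2 : t.1 ≤ q.1) (h3 : q.2 ≤ t.2) (h4 : t.2 ≤ p.2) :
    t = p ∨ t = q := by
  obtain ⟨-, hy, hx, hemp⟩ := mem_FR.1 hq
  exact hemp t ht ⟨by rw [min_eq_left hx.le]; exact h1,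
    by rw [max_eq_right hx.le]; exact h2,
    by rw [min_eq_right hy.le]; exact h3,
    by rw [max_eq_left hy.le]; exact h4⟩

open Classical in
/-- transition pairs at `p`: adjacent funnel points on opposite sides -/
noncomputable def TP (P : Finset (ℝ × ℝ)) (p : ℝ × ℝ) : Finset ((ℝ × ℝ) × (ℝ × ℝ)) :=
  ((FL P p ∪ FR P p) ×ˢ (FL P p ∪ FR P p)).filter (fun ab =>
    ab.1.2 < ab.2.2 ∧
    ((ab.1 ∈ FL P p ∧ ab.2 ∈ FR P p) ∨ (ab.1 ∈ FR P p ∧ ab.2 ∈ FL P p)) ∧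
    ∀ c ∈ FL P p ∪ FR P p, ¬(ab.1.2 < c.2 ∧ c.2 < ab.2.2))

lemma FL_FR_disjoint {P : Finset (ℝ × ℝ)} {p c : ℝ × ℝ} (h1 : c ∈ FL P p) (h2 : c ∈ FR P p) :
    False := by
  have := (mem_FL.1 h1).2.2.1
  have := (mem_FR.1 h2).2.2.1
  linarith

lemma mem_TP {P : Finset (ℝ × ℝ)} {p : ℝ × ℝ} {a b : (ℝ × ℝ)} :
    (a, b) ∈ TP P p ↔ a.2 < b.2 ∧
      ((a ∈ FL P p ∧ b ∈ FR P p) ∨ (a ∈ FR P p ∧ b ∈ FL P p)) ∧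
      ∀ c ∈ FL P p ∪ FR P p, ¬(a.2 < c.2 ∧ c.2 < b.2) := by
  unfold TP
  rw [Finset.mem_filter]
  constructor
  · rintro ⟨-, h⟩; exact h
  · intro h
    refine ⟨Finset.mem_product.2 ⟨?_, ?_⟩, h⟩
    · rcases h.2.1 with ⟨h', -⟩ | ⟨h', -⟩
      · exact Finset.mem_union_left _ h'
      · exact Finset.mem_union_right _ h'
    · rcases h.2.1 with ⟨-, h'⟩ | ⟨-, h'⟩
      · exact Finset.mem_union_right _ h'
      · exact Finset.mem_union_left _ h'

lemma FL_sub_P {P : Finset (ℝ × ℝ)} {p q : ℝ × ℝ} (h : q ∈ FL P p) : q ∈ P := (mem_FL.1 h).1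
lemma FR_sub_P {P : Finset (ℝ × ℝ)} {p q : ℝ × ℝ} (h : q ∈ FR P p) : q ∈ P := (mem_FR.1 h).1

lemma funnel_sub_P {P : Finset (ℝ × ℝ)} {p q : ℝ × ℝ} (h : q ∈ FL P p ∪ FR P p) : q ∈ P := by
  rcases Finset.mem_union.1 h with h | h
  · exact FL_sub_P h
  · exact FR_sub_P h

lemma fContrib_eq {P : Finset (ℝ × ℝ)} (hY : DistinctY P) (p : ℝ × ℝ) :
    fContrib P p = (if FL P p ∪ FR P p = ∅ then 0 else 1) + (TP P p).card := by
  classical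
  set L := (FL P p).image Prod.snd with hL
  set R := (FR P p).image Prod.snd with hR
  have hdisj : ∀ x, ¬(x ∈ L ∧ x ∈ R) := by
    rintro x ⟨hxL, hxR⟩
    obtain ⟨a, ha, ha2⟩ := Finset.mem_image.1 hxL
    obtain ⟨b, hb, hb2⟩ := Finset.mem_image.1 hxR
    have : a = b := hY a (FL_sub_P ha) b (FR_sub_P hb) (by rw [ha2, hb2])
    subst this
    exact FL_FR_disjoint ha hb
  have hcard : (adjLR L R).card = (TP P p).card := by
    symm
    apply Finset.card_bij (fun ab _ => (ab.1.2, ab.2.2))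
    · rintro ⟨a, b⟩ hab
      rw [mem_TP] at hab
      obtain ⟨hy, hside, hbet⟩ := hab
      unfold adjLR
      rw [Finset.mem_filter]
      have haU : a.2 ∈ L ∪ R := by
        rcases hside with ⟨h, -⟩ | ⟨h, -⟩
        · exact Finset.mem_union_left _ (Finset.mem_image_of_mem _ h)
        · exact Finset.mem_union_right _ (Finset.mem_image_of_mem _ h)
      have hbU : b.2 ∈ L ∪ R := by
        rcases hside with ⟨-, h⟩ | ⟨-, h⟩
        · exact Finset.mem_union_right _ (Finset.mem_image_of_mem _ h)
        · exact Finset.mem_union_left _ (Finset.mem_image_of_mem _ h)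
      refine ⟨Finset.mem_product.2 ⟨haU, hbU⟩, hy, ?_, ?_⟩
      · rcases hside with ⟨h1, h2⟩ | ⟨h1, h2⟩
        · exact Or.inl ⟨show a.2 ∈ L from Finset.mem_image_of_mem _ h1,
            show b.2 ∈ R from Finset.mem_image_of_mem _ h2⟩
        · exact Or.inr ⟨show a.2 ∈ R from Finset.mem_image_of_mem _ h1,
            show b.2 ∈ L from Finset.mem_image_of_mem _ h2⟩
      · intro c hc
        rcases Finset.mem_union.1 hc with hcL | hcR
        · obtain ⟨d, hd, hd2⟩ := Finset.mem_image.1 hcL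
          rw [← hd2]
          exact hbet d (Finset.mem_union_left _ hd)
        · obtain ⟨d, hd, hd2⟩ := Finset.mem_image.1 hcR
          rw [← hd2]
          exact hbet d (Finset.mem_union_right _ hd)
    · rintro ⟨a, b⟩ hab ⟨a', b'⟩ hab' heq
      rw [mem_TP] at hab hab'
      rw [Prod.ext_iff] at heq
      obtain ⟨h1, h2⟩ := heq
      dsimp only at h1 h2
      have haP : a ∈ P := by
        rcases hab.2.1 with ⟨h, -⟩ | ⟨h, -⟩
        exacts [FL_sub_P h, FR_sub_P h]
      have haP' : a' ∈ P := by
        rcases hab'.2.1 with ⟨h, -⟩ | ⟨h, -⟩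
        exacts [FL_sub_P h, FR_sub_P h]
      have hbP : b ∈ P := by
        rcases hab.2.1 with ⟨-, h⟩ | ⟨-, h⟩
        exacts [FR_sub_P h, FL_sub_P h]
      have hbP' : b' ∈ P := by
        rcases hab'.2.1 with ⟨-, h⟩ | ⟨-, h⟩
        exacts [FR_sub_P h, FL_sub_P h]
      have ea : a = a' := hY a haP a' haP' h1
      have eb : b = b' := hY b hbP b' hbP' h2
      rw [ea, eb]
    · rintro ⟨u, v⟩ huv
      unfold adjLR at huv
      rw [Finset.mem_filter] at huv
      obtain ⟨-, hlt, hside, hbet⟩ := huv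
      dsimp only at hlt hside hbet
      have : ∃ a b : ℝ × ℝ, a.2 = u ∧ b.2 = v ∧
          ((a ∈ FL P p ∧ b ∈ FR P p) ∨ (a ∈ FR P p ∧ b ∈ FL P p)) := by
        rcases hside with ⟨hu, hv⟩ | ⟨hu, hv⟩
        · obtain ⟨a, ha, ha2⟩ := Finset.mem_image.1 hu
          obtain ⟨b, hb, hb2⟩ := Finset.mem_image.1 hv
          exact ⟨a, b, ha2, hb2, Or.inl ⟨ha, hb⟩⟩
        · obtain ⟨a, ha, ha2⟩ := Finset.mem_image.1 hu
          obtain ⟨b, hb, hb2⟩ := Finset.mem_image.1 hv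
          exact ⟨a, b, ha2, hb2, Or.inr ⟨ha, hb⟩⟩
      obtain ⟨a, b, ha2, hb2, hside'⟩ := this
      refine ⟨(a, b), ?_, ?_⟩
      · rw [mem_TP]
        refine ⟨by rw [ha2, hb2]; exact hlt, hside', ?_⟩
        intro c hc hlt'
        have hcU : c.2 ∈ L ∪ R := by
          rcases Finset.mem_union.1 hc with h | h
          · exact Finset.mem_union_left _ (Finset.mem_image_of_mem _ h)
          · exact Finset.mem_union_right _ (Finset.mem_image_of_mem _ h)
        exact hbet c.2 hcU ⟨by rw [← ha2]; exact hlt'.1, by rw [← hb2]; exact hlt'.2⟩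
      · rw [ha2, hb2]
  have hLRempty : (L ∪ R = ∅) ↔ (FL P p ∪ FR P p = ∅) := by
    rw [hL, hR, ← Finset.image_union]
    constructor
    · intro h
      by_contra hne
      obtain ⟨x, hx⟩ := Finset.nonempty_iff_ne_empty.2 hne
      have : x.2 ∈ (FL P p ∪ FR P p).image Prod.snd := Finset.mem_image_of_mem _ hx
      rw [h] at this
      simpa using this
    · intro h; rw [h]; simp
  unfold fContrib
  rw [mixValue_eq _ _ hdisj, hcard]
  have hiff : (if L ∪ R = ∅ then (0:ℕ) else 1) =
      (if FL P p ∪ FR P p = ∅ then (0:ℕ) else 1) := by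
    by_cases h : FL P p ∪ FR P p = ∅
    · rw [if_pos h, if_pos (hLRempty.2 h)]
    · rw [if_neg h, if_neg (fun hh => h (hLRempty.1 hh))]
  rw [hiff]

/-! ### Geometry -/

/-- LR transition at `p`: `a` in left funnel, `b` in right funnel, adjacent, `a` below. -/
def LRtr (P : Finset (ℝ × ℝ)) (p a b : ℝ × ℝ) : Prop :=
  a ∈ FL P p ∧ b ∈ FR P p ∧ a.2 < b.2 ∧
    ∀ c ∈ FL P p ∪ FR P p, ¬(a.2 < c.2 ∧ c.2 < b.2)

/-- RL transition at `p`: `a` in right funnel, `b` in left funnel, adjacent, `a` below. -/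
def RLtr (P : Finset (ℝ × ℝ)) (p a b : ℝ × ℝ) : Prop :=
  a ∈ FR P p ∧ b ∈ FL P p ∧ a.2 < b.2 ∧
    ∀ c ∈ FL P p ∪ FR P p, ¬(a.2 < c.2 ∧ c.2 < b.2)

lemma inRect_destr_L {p r t : ℝ × ℝ} (hx : r.1 < p.1) (hy : r.2 < p.2) (h : inRect p r t) :
    r.1 ≤ t.1 ∧ t.1 ≤ p.1 ∧ r.2 ≤ t.2 ∧ t.2 ≤ p.2 := by
  obtain ⟨h1, h2, h3, h4⟩ := h
  rw [min_eq_right hx.le] at h1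
  rw [max_eq_left hx.le] at h2
  rw [min_eq_right hy.le] at h3
  rw [max_eq_left hy.le] at h4
  exact ⟨h1, h2, h3, h4⟩

lemma inRect_destr_R {p r t : ℝ × ℝ} (hx : p.1 < r.1) (hy : r.2 < p.2) (h : inRect p r t) :
    p.1 ≤ t.1 ∧ t.1 ≤ r.1 ∧ r.2 ≤ t.2 ∧ t.2 ≤ p.2 := by
  obtain ⟨h1, h2, h3, h4⟩ := h
  rw [min_eq_left hx.le] at h1
  rw [max_eq_right hx.le] at h2
  rw [min_eq_right hy.le] at h3
  rw [max_eq_left hy.le] at h4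
  exact ⟨h1, h2, h3, h4⟩

section Geometry

variable {P : Finset (ℝ × ℝ)} {p a b : ℝ × ℝ}

lemma stairL (hY : DistinctY P) {a a' : ℝ × ℝ}
    (ha : a ∈ FL P p) (ha' : a' ∈ FL P p) (h : a.2 < a'.2) : a'.1 < a.1 := by
  by_contra hle
  push_neg at hle
  obtain ⟨haP', hy', hx', -⟩ := mem_FL.1 ha'
  obtain ⟨haP, hy, hx, -⟩ := mem_FL.1 ha
  rcases empL ha haP' hle hx'.le h.le hy'.le with h' | h'
  · rw [h'] at hy'; exact lt_irrefl _ hy'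
  · rw [h'] at h; exact lt_irrefl _ h

lemma stairR (hY : DistinctY P) {b b' : ℝ × ℝ}
    (hb : b ∈ FR P p) (hb' : b' ∈ FR P p) (h : b.2 < b'.2) : b.1 < b'.1 := by
  by_contra hle
  push_neg at hle
  obtain ⟨hbP', hy', hx', -⟩ := mem_FR.1 hb'
  obtain ⟨hbP, hy, hx, -⟩ := mem_FR.1 hb
  rcases empR hb hbP' hx'.le hle h.le hy'.le with h' | h'
  · rw [h'] at hy'; exact lt_irrefl _ hy'
  · rw [h'] at h; exact lt_irrefl _ h

/-- the open region between an adjacent LR pair is empty -/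
lemma regionLR (hX : DistinctX P) (hY : DistinctY P) (hLR : LRtr P p a b) :
    ∀ t ∈ P, a.1 ≤ t.1 → t.1 ≤ b.1 → a.2 < t.2 → t.2 < b.2 → False := by
  classical
  intro t0 ht0 g1 g2 g3 g4
  obtain ⟨ha, hb, hab, hadj⟩ := hLR
  obtain ⟨haP, hay, hax, -⟩ := mem_FL.1 ha
  obtain ⟨hbP, hby, hbx, -⟩ := mem_FR.1 hb
  set S := P.filter (fun t => a.1 ≤ t.1 ∧ t.1 ≤ b.1 ∧ a.2 < t.2 ∧ t.2 < b.2) with hS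
  have hmem0 : t0 ∈ S := Finset.mem_filter.2 ⟨ht0, g1, g2, g3, g4⟩
  obtain ⟨r, hrS, hrmax⟩ := Finset.exists_max_image S (fun t => t.2) ⟨t0, hmem0⟩
  obtain ⟨hrP, hr1, hr2, hr3, hr4⟩ := Finset.mem_filter.1 hrS
  have hrb : r ≠ b := fun he => by rw [he] at hr4; exact lt_irrefl _ hr4
  have hrb1 : r.1 < b.1 := lt_of_le_of_ne hr2 (fun he => hrb (hX r hrP b hbP he))
  by_cases hrp : r.1 ≤ p.1
  · rcases empL ha hrP hr1 hrp hr3.le (le_trans hr4.le hby.le) with h' | h'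
    · rw [h'] at hr4; exact absurd (lt_trans hr4 hby) (lt_irrefl _)
    · rw [h'] at hr3; exact lt_irrefl _ hr3
  · push_neg at hrp
    have hrFR : r ∈ FR P p := by
      rw [mem_FR]
      refine ⟨hrP, lt_trans hr4 hby, hrp, ?_⟩
      intro t' ht' hrect
      obtain ⟨k1, k2, k3, k4⟩ := inRect_destr_R hrp (lt_trans hr4 hby) hrect
      by_cases hty : b.2 ≤ t'.2
      · rcases empR hb ht' k1 (le_trans k2 hrb1.le) hty k4 with h' | h'
        · exact Or.inl h'
        · exfalso
          rw [h'] at k2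
          exact absurd (lt_of_le_of_lt k2 hrb1) (lt_irrefl _)
      · push_neg at hty
        right
        have ht'S : t' ∈ S := Finset.mem_filter.2 ⟨ht',
          le_trans hax.le k1,
          le_trans k2 hrb1.le,
          lt_of_lt_of_le hr3 k3, hty⟩
        have := hrmax t' ht'S
        exact hY t' ht' r hrP (le_antisymm this k3)
    exact hadj r (Finset.mem_union_right _ hrFR) ⟨hr3, hr4⟩

/-- the open region between an adjacent RL pair is empty -/
lemma regionRL (hX : DistinctX P) (hY : DistinctY P) (hRL : RLtr P p a b) :
    ∀ t ∈ P, b.1 ≤ t.1 → t.1 ≤ a.1 → a.2 < t.2 → t.2 < b.2 → False := by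
  classical
  intro t0 ht0 g1 g2 g3 g4
  obtain ⟨ha, hb, hab, hadj⟩ := hRL
  obtain ⟨haP, hay, hax, -⟩ := mem_FR.1 ha
  obtain ⟨hbP, hby, hbx, -⟩ := mem_FL.1 hb
  set S := P.filter (fun t => b.1 ≤ t.1 ∧ t.1 ≤ a.1 ∧ a.2 < t.2 ∧ t.2 < b.2) with hS
  have hmem0 : t0 ∈ S := Finset.mem_filter.2 ⟨ht0, g1, g2, g3, g4⟩
  obtain ⟨r, hrS, hrmax⟩ := Finset.exists_max_image S (fun t => t.2) ⟨t0, hmem0⟩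
  obtain ⟨hrP, hr1, hr2, hr3, hr4⟩ := Finset.mem_filter.1 hrS
  have hrb : r ≠ b := fun he => by rw [he] at hr4; exact lt_irrefl _ hr4
  have hrb1 : b.1 < r.1 := lt_of_le_of_ne hr1 (fun he => hrb (hX r hrP b hbP he.symm))
  by_cases hrp : p.1 ≤ r.1
  · rcases empR ha hrP hrp hr2 hr3.le (le_trans hr4.le hby.le) with h' | h'
    · rw [h'] at hr4; exact absurd (lt_trans hr4 hby) (lt_irrefl _)
    · rw [h'] at hr3; exact lt_irrefl _ hr3
  · push_neg at hrp
    have hrFL : r ∈ FL P p := by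
      rw [mem_FL]
      refine ⟨hrP, lt_trans hr4 hby, hrp, ?_⟩
      intro t' ht' hrect
      obtain ⟨k1, k2, k3, k4⟩ := inRect_destr_L hrp (lt_trans hr4 hby) hrect
      by_cases hty : b.2 ≤ t'.2
      · rcases empL hb ht' (le_trans hrb1.le k1) k2 hty k4 with h' | h'
        · exact Or.inl h'
        · exfalso
          rw [h'] at k1
          exact absurd (lt_of_lt_of_le hrb1 k1) (lt_irrefl _)
      · push_neg at hty
        right
        have ht'S : t' ∈ S := Finset.mem_filter.2 ⟨ht',
          le_trans hrb1.le k1,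
          le_trans k2 hax.le,
          lt_of_lt_of_le hr3 k3, hty⟩
        have := hrmax t' ht'S
        exact hY t' ht' r hrP (le_antisymm this k3)
    exact hadj r (Finset.mem_union_left _ hrFL) ⟨hr3, hr4⟩

/-- construct a z-rectangle from an LR transition with a nonempty witness strip -/
lemma LR_zrect (hX : DistinctX P) (hY : DistinctY P) (hp : p ∈ P) (hLR : LRtr P p a b)
    (hW : ∃ t ∈ P, p.1 < t.1 ∧ t.1 < b.1 ∧ t.2 < b.2) :
    ∃ q r, IsZRect P p q r b := by
  classical
  obtain ⟨ha, hb, hab, hadj⟩ := hLR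
  obtain ⟨haP, hay, hax, -⟩ := mem_FL.1 ha
  obtain ⟨hbP, hby, hbx, -⟩ := mem_FR.1 hb
  set S := P.filter (fun t => p.1 < t.1 ∧ t.1 < b.1 ∧ t.2 < b.2) with hSdef
  have hSne : S.Nonempty := by
    obtain ⟨t, ht, h1, h2, h3⟩ := hW
    exact ⟨t, Finset.mem_filter.2 ⟨ht, h1, h2, h3⟩⟩
  obtain ⟨r, hrS, hrmax⟩ := Finset.exists_max_image S (fun t => t.2) hSne
  obtain ⟨hrP, hr1, hr2, hr3⟩ := Finset.mem_filter.1 hrS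
  have hra : r.2 < a.2 := by
    rcases lt_trichotomy r.2 a.2 with h | h | h
    · exact h
    · exact absurd (hY r hrP a haP h) (fun he => by
        rw [he] at hr1; exact lt_irrefl _ (lt_trans hax hr1))
    · exact absurd (regionLR hX hY ⟨ha, hb, hab, hadj⟩ r hrP
        (le_trans hax.le hr1.le) hr2.le h hr3) (fun f => f)
  set V := P.filter (fun t => t.1 < p.1 ∧ r.2 < t.2 ∧ t.2 < b.2) with hVdef
  have haV : a ∈ V := Finset.mem_filter.2 ⟨haP, hax, hra, hab⟩
  obtain ⟨q, hqV, hqmax⟩ := Finset.exists_max_image V (fun t => t.1) ⟨a, haV⟩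
  obtain ⟨hqP, hq1, hq2, hq3⟩ := Finset.mem_filter.1 hqV
  have haq : a.1 ≤ q.1 := hqmax a haV
  refine ⟨q, r, hp, hqP, hrP, hbP, hq1, hr1, hr2, hq2, hq3, hby, ?_⟩
  intro t ht k1 k2 k3 k4
  rcases lt_trichotomy t.2 r.2 with hc | hc | hc
  · exact absurd k3 (not_le.2 hc)
  · exact Or.inr (Or.inr (Or.inl (hY t ht r hrP hc)))
  rcases lt_trichotomy t.2 b.2 with hd | hd | hd
  · -- below b
    by_cases he : t.1 < p.1
    · have htV : t ∈ V := Finset.mem_filter.2 ⟨ht, he, hc, hd⟩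
      have := hqmax t htV
      exact Or.inr (Or.inl (hX t ht q hqP (le_antisymm this k1)))
    · push_neg at he
      rcases eq_or_lt_of_le he with he' | he'
      · exact Or.inl (hX t ht p hp he'.symm)
      · rcases eq_or_lt_of_le k2 with hf | hf
        · exact Or.inr (Or.inr (Or.inr (hX t ht b hbP hf)))
        · have htS : t ∈ S := Finset.mem_filter.2 ⟨ht, he', hf, hd⟩
          have := hrmax t htS
          exact absurd (lt_of_le_of_lt this hc) (lt_irrefl _)
  · exact Or.inr (Or.inr (Or.inr (hY t ht b hbP hd)))
  · -- above b
    by_cases he : t.1 ≤ p.1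
    · rcases empL ha ht (le_trans haq k1) he (le_trans (le_trans hab.le hd.le) le_rfl) k4 with
        h' | h'
      · exact Or.inl h'
      · exfalso
        rw [h'] at hd
        exact lt_irrefl _ (lt_trans hab hd)
    · push_neg at he
      rcases empR hb ht he.le k2 hd.le k4 with h' | h'
      · exact Or.inl h'
      · exact Or.inr (Or.inr (Or.inr h'))

/-- construct a z-rectangle from an RL transition with a nonempty witness region -/
lemma RL_zrect (hX : DistinctX P) (hY : DistinctY P) (hp : p ∈ P) (hRL : RLtr P p a b)
    (hW : ∃ t ∈ P, a.1 < t.1 ∧ a.2 < t.2 ∧ t.2 < p.2) :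
    ∃ s, IsZRect P p b a s := by
  classical
  obtain ⟨ha, hb, hab, hadj⟩ := hRL
  obtain ⟨haP, hay, hax, -⟩ := mem_FR.1 ha
  obtain ⟨hbP, hby, hbx, -⟩ := mem_FL.1 hb
  set T := P.filter (fun t => a.1 < t.1 ∧ a.2 < t.2 ∧ t.2 < p.2) with hTdef
  have hTne : T.Nonempty := by
    obtain ⟨t, ht, h1, h2, h3⟩ := hW
    exact ⟨t, Finset.mem_filter.2 ⟨ht, h1, h2, h3⟩⟩
  obtain ⟨s, hsT, hsmin⟩ := Finset.exists_min_image T (fun t => t.1) hTne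
  obtain ⟨hsP, hs1, hs2, hs3⟩ := Finset.mem_filter.1 hsT
  have hsb : b.2 < s.2 := by
    rcases lt_trichotomy s.2 b.2 with h | h | h
    · exfalso
      have hsFR : s ∈ FR P p := by
        rw [mem_FR]
        refine ⟨hsP, hs3, lt_trans hax hs1, ?_⟩
        intro t' ht' hrect
        obtain ⟨k1, k2, k3, k4⟩ := inRect_destr_R (lt_trans hax hs1) hs3 hrect
        by_cases hta : t'.1 ≤ a.1
        · rcases empR ha ht' k1 hta (le_trans hs2.le k3) k4 with h' | h'
          · exact Or.inl h'
          · exfalso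
            rw [h'] at k3
            exact absurd (lt_of_lt_of_le hs2 k3) (lt_irrefl _)
        · push_neg at hta
          rcases eq_or_lt_of_le k4 with hf | hf
          · exact Or.inl (hY t' ht' p hp hf)
          · have ht'T : t' ∈ T := Finset.mem_filter.2 ⟨ht', hta,
              lt_of_lt_of_le hs2 k3, hf⟩
            have := hsmin t' ht'T
            exact Or.inr (hX t' ht' s hsP (le_antisymm k2 this))
      exact hadj s (Finset.mem_union_right _ hsFR) ⟨hs2, h⟩
    · exact absurd (hY s hsP b hbP h) (fun he => by
        rw [he] at hs1; exact lt_irrefl _ (lt_trans (lt_trans hbx hax) hs1))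
    · exact h
  refine ⟨s, hp, hbP, haP, hsP, hbx, hax, hs1, hab, hsb, hs3, ?_⟩
  intro t ht k1 k2 k3 k4
  rcases eq_or_lt_of_le k3 with hc | hc
  · exact Or.inr (Or.inr (Or.inl (hY t ht a haP hc.symm)))
  rcases eq_or_lt_of_le k4 with hd | hd
  · exact Or.inl (hY t ht p hp hd)
  by_cases he : a.1 < t.1
  · have htT : t ∈ T := Finset.mem_filter.2 ⟨ht, he, hc, hd⟩
    have := hsmin t htT
    exact Or.inr (Or.inr (Or.inr (hX t ht s hsP (le_antisymm k2 this))))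
  · push_neg at he
    rcases lt_trichotomy t.2 b.2 with hf | hf | hf
    · exact absurd (regionRL hX hY ⟨ha, hb, hab, hadj⟩ t ht k1 he hc hf) (fun f => f)
    · exact Or.inr (Or.inl (hY t ht b hbP hf))
    · by_cases hg : t.1 ≤ p.1
      · rcases empL hb ht k1 hg hf.le hd.le with h' | h'
        · exact Or.inl h'
        · exact Or.inr (Or.inl h')
      · push_neg at hg
        rcases empR ha ht hg.le he hc.le hd.le with h' | h'
        · exact Or.inl h'
        · exact Or.inr (Or.inr (Or.inl h'))

/-- structural: the four corners of a z-rect are funnel points of the top point -/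
lemma zrect_q_FL (hX : DistinctX P) {q r s : ℝ × ℝ} (hz : IsZRect P p q r s) :
    q ∈ FL P p := by
  obtain ⟨hpP, hqP, hrP, hsP, x1, x2, x3, y1, y2, y3, hemp⟩ := hz
  rw [mem_FL]
  refine ⟨hqP, lt_trans y2 y3, x1, ?_⟩
  intro t ht hrect
  obtain ⟨k1, k2, k3, k4⟩ := inRect_destr_L x1 (lt_trans y2 y3) hrect
  rcases hemp t ht k1 (le_trans k2 (le_trans x2.le x3.le)) (le_trans y1.le k3) k4 with
    h | h | h | h
  · exact Or.inl h
  · exact Or.inr h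
  · exfalso; rw [h] at k2; exact absurd (lt_of_lt_of_le x2 k2) (lt_irrefl _)
  · exfalso; rw [h] at k2
    exact absurd (lt_of_lt_of_le (lt_trans x2 x3) k2) (lt_irrefl _)

lemma zrect_r_FR (hX : DistinctX P) {q r s : ℝ × ℝ} (hz : IsZRect P p q r s) :
    r ∈ FR P p := by
  obtain ⟨hpP, hqP, hrP, hsP, x1, x2, x3, y1, y2, y3, hemp⟩ := hz
  rw [mem_FR]
  refine ⟨hrP, lt_trans y1 (lt_trans y2 y3), x2, ?_⟩
  intro t ht hrect
  obtain ⟨k1, k2, k3, k4⟩ := inRect_destr_R x2 (lt_trans y1 (lt_trans y2 y3)) hrect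
  rcases hemp t ht (le_trans x1.le k1) (le_trans k2 x3.le) k3 k4 with h | h | h | h
  · exact Or.inl h
  · exfalso; rw [h] at k1; exact absurd (lt_of_lt_of_le x1 k1) (lt_irrefl _)
  · exact Or.inr h
  · exfalso; rw [h] at k2; exact absurd (lt_of_lt_of_le x3 k2) (lt_irrefl _)

lemma zrect_s_FR (hX : DistinctX P) {q r s : ℝ × ℝ} (hz : IsZRect P p q r s) :
    s ∈ FR P p := by
  obtain ⟨hpP, hqP, hrP, hsP, x1, x2, x3, y1, y2, y3, hemp⟩ := hz
  rw [mem_FR]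
  refine ⟨hsP, y3, lt_trans x2 x3, ?_⟩
  intro t ht hrect
  obtain ⟨k1, k2, k3, k4⟩ := inRect_destr_R (lt_trans x2 x3) y3 hrect
  rcases hemp t ht (le_trans x1.le k1) k2 (le_trans (lt_trans y1 y2).le k3) k4 with
    h | h | h | h
  · exact Or.inl h
  · exfalso; rw [h] at k1; exact absurd (lt_of_lt_of_le x1 k1) (lt_irrefl _)
  · exfalso; rw [h] at k3; exact absurd (lt_of_le_of_lt k3 (lt_trans y1 y2)) (lt_irrefl _)
  · exact Or.inr h

/-- every z-rect has an LR transition at its top point ending at `s` -/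
lemma zrect_LR (hX : DistinctX P) (hY : DistinctY P) {q r s : ℝ × ℝ}
    (hz : IsZRect P p q r s) : ∃ a, LRtr P p a s := by
  classical
  have hqFL := zrect_q_FL hX hz
  have hsFR := zrect_s_FR hX hz
  obtain ⟨hpP, hqP, hrP, hsP, x1, x2, x3, y1, y2, y3, hemp⟩ := hz
  set F := (FL P p ∪ FR P p).filter (fun c => c.2 < s.2) with hFdef
  have hqF : q ∈ F := Finset.mem_filter.2 ⟨Finset.mem_union_left _ hqFL, y2⟩
  obtain ⟨σ, hσF, hσmax⟩ := Finset.exists_max_image F (fun c => c.2) ⟨q, hqF⟩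
  obtain ⟨hσU, hσs⟩ := Finset.mem_filter.1 hσF
  have hσq : q.2 ≤ σ.2 := hσmax q hqF
  have hσFL : σ ∈ FL P p := by
    rcases Finset.mem_union.1 hσU with h | h
    · exact h
    · exfalso
      have hσP : σ ∈ P := FR_sub_P h
      rcases eq_or_lt_of_le hσq with he | he
      · have hσeq : σ = q := hY σ hσP q hqP he.symm
        rw [hσeq] at h
        exact FL_FR_disjoint hqFL h
      · have hσ1 : σ.1 < s.1 := stairR hY h hsFR hσs
        have hσp : p.1 < σ.1 := (mem_FR.1 h).2.2.1
        rcases hemp σ hσP (le_trans x1.le hσp.le) hσ1.le (lt_trans y1 he).le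
            (mem_FR.1 h).2.1.le with h' | h' | h' | h'
        · rw [h'] at hσp; exact lt_irrefl _ hσp
        · rw [h'] at hσp; exact absurd (lt_trans x1 hσp) (lt_irrefl _)
        · rw [h'] at he; exact absurd (lt_trans y1 he) (lt_irrefl _)
        · rw [h'] at hσs; exact lt_irrefl _ hσs
  refine ⟨σ, hσFL, hsFR, hσs, ?_⟩
  intro c hc ⟨hc1, hc2⟩
  have hcF : c ∈ F := Finset.mem_filter.2 ⟨hc, hc2⟩
  exact absurd (hσmax c hcF) (not_le.2 hc1)

/-- every z-rect has an RL transition at its top point starting at `r` -/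
lemma zrect_RL (hX : DistinctX P) (hY : DistinctY P) {q r s : ℝ × ℝ}
    (hz : IsZRect P p q r s) : ∃ b, RLtr P p r b := by
  classical
  have hqFL := zrect_q_FL hX hz
  have hrFR := zrect_r_FR hX hz
  have hsFR := zrect_s_FR hX hz
  obtain ⟨hpP, hqP, hrP, hsP, x1, x2, x3, y1, y2, y3, hemp⟩ := hz
  set F := (FL P p ∪ FR P p).filter (fun c => r.2 < c.2) with hFdef
  have hqF : q ∈ F := Finset.mem_filter.2 ⟨Finset.mem_union_left _ hqFL, y1⟩
  obtain ⟨σ, hσF, hσmin⟩ := Finset.exists_min_image F (fun c => c.2) ⟨q, hqF⟩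
  obtain ⟨hσU, hσr⟩ := Finset.mem_filter.1 hσF
  have hσq : σ.2 ≤ q.2 := hσmin q hqF
  have hσFL : σ ∈ FL P p := by
    rcases Finset.mem_union.1 hσU with h | h
    · exact h
    · exfalso
      have hσP : σ ∈ P := FR_sub_P h
      rcases eq_or_lt_of_le hσq with he | he
      · have hσeq : σ = q := hY σ hσP q hqP he
        rw [hσeq] at h
        exact FL_FR_disjoint hqFL h
      · have hσ1 : σ.1 < s.1 := stairR hY h hsFR (lt_trans he y2)
        have hσp : p.1 < σ.1 := (mem_FR.1 h).2.2.1
        rcases hemp σ hσP (le_trans x1.le hσp.le) hσ1.le hσr.le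
            (mem_FR.1 h).2.1.le with h' | h' | h' | h'
        · rw [h'] at hσp; exact lt_irrefl _ hσp
        · rw [h'] at hσp; exact absurd (lt_trans x1 hσp) (lt_irrefl _)
        · rw [h'] at hσr; exact lt_irrefl _ hσr
        · rw [h'] at he; exact absurd (lt_trans he y2) (lt_irrefl _)
  refine ⟨σ, hrFR, hσFL, hσr, ?_⟩
  intro c hc ⟨hc1, hc2⟩
  have hcF : c ∈ F := Finset.mem_filter.2 ⟨hc, hc1⟩
  exact absurd (hσmin c hcF) (not_le.2 hc2)

/-- a z-rect is determined by its top point and right point `s` -/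
lemma zrect_unique_s (hX : DistinctX P) (hY : DistinctY P) {q r q' r' s : ℝ × ℝ}
    (hz : IsZRect P p q r s) (hz' : IsZRect P p q' r' s) : q = q' ∧ r = r' := by
  have aux : ∀ q r q' r' : ℝ × ℝ, IsZRect P p q r s → IsZRect P p q' r' s →
      q'.2 < q.2 → False := by
    intro q r q' r' hz hz' hlt
    have hqFL := zrect_q_FL hX hz
    have hqFL' := zrect_q_FL hX hz'
    have hq1 : q.1 < q'.1 := stairL hY hqFL' hqFL hlt
    obtain ⟨hpP, hqP, hrP, hsP, x1, x2, x3, y1, y2, y3, hemp⟩ := hz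
    obtain ⟨-, hqP', hrP', -, x1', x2', x3', y1', y2', y3', hemp'⟩ := hz'
    by_cases hc : r.2 ≤ q'.2
    · rcases hemp q' hqP' hq1.le (le_trans x1'.le (lt_trans x2 x3).le) hc
          (lt_trans y2' y3').le with h | h | h | h
      · rw [h] at x1'; exact lt_irrefl _ x1'
      · rw [h] at hlt; exact lt_irrefl _ hlt
      · rw [h] at x1'; exact absurd (lt_trans x1' x2) (lt_irrefl _)
      · rw [h] at hlt; exact absurd (lt_trans y2 hlt) (lt_irrefl _)
    · push_neg at hc
      rcases hemp' r hrP (lt_trans x1' x2).le x3.le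
          (lt_trans y1' hc).le (lt_trans y1 (lt_trans y2 y3)).le with h | h | h | h
      · rw [h] at x2; exact lt_irrefl _ x2
      · rw [h] at hc; exact lt_irrefl _ hc
      · rw [h] at hc; exact absurd (lt_trans y1' hc) (lt_irrefl _)
      · rw [h] at x3; exact lt_irrefl _ x3
  have hq : q = q' := by
    rcases lt_trichotomy q.2 q'.2 with h | h | h
    · exact absurd (aux q' r' q r hz' hz h) (fun f => f)
    · exact hY q hz.2.1 q' hz'.2.1 h
    · exact absurd (aux q r q' r' hz hz' h) (fun f => f)
  subst hq
  have aux2 : ∀ r r' : ℝ × ℝ, IsZRect P p q r s → IsZRect P p q r' s →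
      r'.2 < r.2 → False := by
    intro r r' hz hz' hlt
    obtain ⟨hpP, hqP, hrP, hsP, x1, x2, x3, y1, y2, y3, hemp⟩ := hz
    obtain ⟨-, -, hrP', -, x1', x2', x3', y1', y2', y3', hemp'⟩ := hz'
    rcases hemp' r hrP (lt_trans x1 x2).le x3.le hlt.le
        (lt_trans y1 (lt_trans y2 y3)).le with h | h | h | h
    · rw [h] at x2; exact lt_irrefl _ x2
    · rw [h] at x2; exact absurd (lt_trans x1 x2) (lt_irrefl _)
    · rw [h] at hlt; exact lt_irrefl _ hlt
    · rw [h] at x3; exact lt_irrefl _ x3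
  have hr : r = r' := by
    rcases lt_trichotomy r.2 r'.2 with h | h | h
    · exact absurd (aux2 r' r hz' hz h) (fun f => f)
    · exact hY r hz.2.2.1 r' hz'.2.2.1 h
    · exact absurd (aux2 r r' hz hz' h) (fun f => f)
  exact ⟨rfl, hr⟩

/-- a z-rect is determined by its top point and bottom point `r` -/
lemma zrect_unique_r (hX : DistinctX P) (hY : DistinctY P) {q r q' s s' : ℝ × ℝ}
    (hz : IsZRect P p q r s) (hz' : IsZRect P p q' r s') : q = q' ∧ s = s' := by
  have aux : ∀ q s q' s' : ℝ × ℝ, IsZRect P p q r s → IsZRect P p q' r s' →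
      q'.2 < q.2 → False := by
    intro q s q' s' hz hz' hlt
    have hqFL := zrect_q_FL hX hz
    have hqFL' := zrect_q_FL hX hz'
    have hq1 : q.1 < q'.1 := stairL hY hqFL' hqFL hlt
    obtain ⟨hpP, hqP, hrP, hsP, x1, x2, x3, y1, y2, y3, hemp⟩ := hz
    obtain ⟨-, hqP', -, -, x1', x2', x3', y1', y2', y3', hemp'⟩ := hz'
    rcases hemp q' hqP' hq1.le (le_trans x1'.le (lt_trans x2 x3).le) y1'.le
        (lt_trans y2' y3').le with h | h | h | h
    · rw [h] at x1'; exact lt_irrefl _ x1'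
    · rw [h] at hlt; exact lt_irrefl _ hlt
    · rw [h] at x1'; exact absurd (lt_trans x1' x2) (lt_irrefl _)
    · rw [h] at hlt; exact absurd (lt_trans y2 hlt) (lt_irrefl _)
  have hq : q = q' := by
    rcases lt_trichotomy q.2 q'.2 with h | h | h
    · exact absurd (aux q' s' q s hz' hz h) (fun f => f)
    · exact hY q hz.2.1 q' hz'.2.1 h
    · exact absurd (aux q s q' s' hz hz' h) (fun f => f)
  subst hq
  have aux2 : ∀ s s' : ℝ × ℝ, IsZRect P p q r s → IsZRect P p q r s' →
      s'.2 < s.2 → False := by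
    intro s s' hz hz' hlt
    have hsFR := zrect_s_FR hX hz
    have hsFR' := zrect_s_FR hX hz'
    have hs1 : s'.1 < s.1 := stairR hY hsFR' hsFR hlt
    obtain ⟨hpP, hqP, hrP, hsP, x1, x2, x3, y1, y2, y3, hemp⟩ := hz
    obtain ⟨-, -, -, hsP', x1', x2', x3', y1', y2', y3', hemp'⟩ := hz'
    rcases hemp s' hsP' (lt_trans x1 (lt_trans x2 x3')).le hs1.le
        (lt_trans y1' y2').le y3'.le with h | h | h | h
    · rw [h] at y3'; exact lt_irrefl _ y3'
    · rw [h] at x3'; exact absurd (lt_trans x1 (lt_trans x2 x3')) (lt_irrefl _)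
    · rw [h] at y2'; exact absurd (lt_trans y1' y2') (lt_irrefl _)
    · rw [h] at hlt; exact lt_irrefl _ hlt
  have hs : s = s' := by
    rcases lt_trichotomy s.2 s'.2 with h | h | h
    · exact absurd (aux2 s' s hz' hz h) (fun f => f)
    · exact hY s hz.2.2.2.1 s' hz'.2.2.2.1 h
    · exact absurd (aux2 s s' hz hz' h) (fun f => f)
  exact ⟨rfl, hs⟩

/-- predecessor below a fixed upper transition endpoint is unique -/
lemma LR_pred_unique (hY : DistinctY P) {a a' b : ℝ × ℝ}
    (h1 : LRtr P p a b) (h2 : LRtr P p a' b) : a = a' := by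
  rcases lt_trichotomy a.2 a'.2 with h | h | h
  · exact ((h1.2.2.2 a' (Finset.mem_union_left _ h2.1)) ⟨h, h2.2.2.1⟩).elim
  · exact hY a (FL_sub_P h1.1) a' (FL_sub_P h2.1) h
  · exact ((h2.2.2.2 a (Finset.mem_union_left _ h1.1)) ⟨h, h1.2.2.1⟩).elim

lemma RL_succ_unique (hY : DistinctY P) {a b b' : ℝ × ℝ}
    (h1 : RLtr P p a b) (h2 : RLtr P p a b') : b = b' := by
  rcases lt_trichotomy b.2 b'.2 with h | h | h
  · exact ((h2.2.2.2 b (Finset.mem_union_left _ h1.2.1)) ⟨h1.2.2.1, h⟩).elim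
  · exact hY b (FL_sub_P h1.2.1) b' (FL_sub_P h2.2.1) h
  · exact ((h1.2.2.2 b' (Finset.mem_union_left _ h2.2.1)) ⟨h2.2.2.1, h⟩).elim

/-- at most one LR transition at `p` has an empty witness strip -/
lemma badLR_unique (hX : DistinctX P) (hY : DistinctY P) {a b a' b' : ℝ × ℝ}
    (h1 : LRtr P p a b) (h2 : LRtr P p a' b')
    (w1 : ¬∃ t ∈ P, p.1 < t.1 ∧ t.1 < b.1 ∧ t.2 < b.2)
    (w2 : ¬∃ t ∈ P, p.1 < t.1 ∧ t.1 < b'.1 ∧ t.2 < b'.2) : a = a' ∧ b = b' := by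
  have hb : b = b' := by
    rcases lt_trichotomy b.2 b'.2 with h | h | h
    · exact (w2 ⟨b, FR_sub_P h1.2.1, (mem_FR.1 h1.2.1).2.2.1,
        stairR hY h1.2.1 h2.2.1 h, h⟩).elim
    · exact hY b (FR_sub_P h1.2.1) b' (FR_sub_P h2.2.1) h
    · exact (w1 ⟨b', FR_sub_P h2.2.1, (mem_FR.1 h2.2.1).2.2.1,
        stairR hY h2.2.1 h1.2.1 h, h⟩).elim
  subst hb
  exact ⟨LR_pred_unique hY h1 h2, rfl⟩

/-- at most one RL transition at `p` has an empty witness region -/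
lemma badRL_unique (hX : DistinctX P) (hY : DistinctY P) {a b a' b' : ℝ × ℝ}
    (h1 : RLtr P p a b) (h2 : RLtr P p a' b')
    (w1 : ¬∃ t ∈ P, a.1 < t.1 ∧ a.2 < t.2 ∧ t.2 < p.2)
    (w2 : ¬∃ t ∈ P, a'.1 < t.1 ∧ a'.2 < t.2 ∧ t.2 < p.2) : a = a' ∧ b = b' := by
  have ha : a = a' := by
    rcases lt_trichotomy a.2 a'.2 with h | h | h
    · exact (w1 ⟨a', FR_sub_P h2.1, stairR hY h1.1 h2.1 h, h,
        (mem_FR.1 h2.1).2.1⟩).elim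
    · exact hY a (FR_sub_P h1.1) a' (FR_sub_P h2.1) h
    · exact (w2 ⟨a, FR_sub_P h1.1, stairR hY h2.1 h1.1 h, h,
        (mem_FR.1 h1.1).2.1⟩).elim
  subst ha
  exact ⟨rfl, RL_succ_unique hY h1 h2⟩

end Geometry


/-! ### Global counting -/

noncomputable def ZS (P : Finset (ℝ × ℝ)) : Finset ((ℝ×ℝ) × (ℝ×ℝ) × (ℝ×ℝ) × (ℝ×ℝ)) :=
  ((P ×ˢ P ×ˢ P ×ˢ P).filter (fun t => IsZRect P t.1 t.2.1 t.2.2.1 t.2.2.2))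

lemma zRects_eq (P : Finset (ℝ × ℝ)) : zRects P = (ZS P).card := rfl

lemma mem_ZS {P : Finset (ℝ × ℝ)} {z : (ℝ×ℝ) × (ℝ×ℝ) × (ℝ×ℝ) × (ℝ×ℝ)} :
    z ∈ ZS P ↔ IsZRect P z.1 z.2.1 z.2.2.1 z.2.2.2 := by
  unfold ZS
  rw [Finset.mem_filter]
  constructor
  · rintro ⟨-, h⟩; exact h
  · intro h
    refine ⟨?_, h⟩
    obtain ⟨h1, h2, h3, h4, -⟩ := h
    simp [Finset.mem_product]
    exact ⟨h1, h2, h3, h4⟩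

open Classical in
noncomputable def LRS (P : Finset (ℝ × ℝ)) (p : ℝ × ℝ) : Finset ((ℝ×ℝ) × (ℝ×ℝ)) :=
  (TP P p).filter (fun ab => ab.1 ∈ FL P p)

open Classical in
noncomputable def RLS (P : Finset (ℝ × ℝ)) (p : ℝ × ℝ) : Finset ((ℝ×ℝ) × (ℝ×ℝ)) :=
  (TP P p).filter (fun ab => ab.1 ∈ FR P p)

lemma mem_LRS {P : Finset (ℝ × ℝ)} {p a b : ℝ × ℝ} :
    (a, b) ∈ LRS P p ↔ LRtr P p a b := by
  unfold LRS
  rw [Finset.mem_filter, mem_TP]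
  constructor
  · rintro ⟨⟨hy, hside, hadj⟩, hfl⟩
    rcases hside with ⟨h1, h2⟩ | ⟨h1, h2⟩
    · exact ⟨h1, h2, hy, hadj⟩
    · exact absurd hfl (fun hc => FL_FR_disjoint hc h1)
  · rintro ⟨h1, h2, hy, hadj⟩
    exact ⟨⟨hy, Or.inl ⟨h1, h2⟩, hadj⟩, h1⟩

lemma mem_RLS {P : Finset (ℝ × ℝ)} {p a b : ℝ × ℝ} :
    (a, b) ∈ RLS P p ↔ RLtr P p a b := by
  unfold RLS
  rw [Finset.mem_filter, mem_TP]
  constructor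
  · rintro ⟨⟨hy, hside, hadj⟩, hfr⟩
    rcases hside with ⟨h1, h2⟩ | ⟨h1, h2⟩
    · exact absurd hfr (fun hc => FL_FR_disjoint h1 hc)
    · exact ⟨h1, h2, hy, hadj⟩
  · rintro ⟨h1, h2, hy, hadj⟩
    exact ⟨⟨hy, Or.inr ⟨h1, h2⟩, hadj⟩, h1⟩

lemma TP_split (P : Finset (ℝ × ℝ)) (p : ℝ × ℝ) :
    (TP P p).card = (LRS P p).card + (RLS P p).card := by
  classical
  have h := Finset.card_filter_add_card_filter_not
    (s := TP P p) (p := fun ab => ab.1 ∈ FL P p)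
  have hneg : (TP P p).filter (fun ab => ¬ ab.1 ∈ FL P p) = RLS P p := by
    ext ⟨a, b⟩
    rw [Finset.mem_filter, mem_RLS]
    constructor
    · rintro ⟨hTP, hn⟩
      rw [mem_TP] at hTP
      obtain ⟨hy, hside, hadj⟩ := hTP
      rcases hside with ⟨h1, h2⟩ | ⟨h1, h2⟩
      · exact absurd h1 hn
      · exact ⟨h1, h2, hy, hadj⟩
    · rintro ⟨h1, h2, hy, hadj⟩
      refine ⟨mem_TP.2 ⟨hy, Or.inr ⟨h1, h2⟩, hadj⟩, ?_⟩
      exact fun hc => FL_FR_disjoint hc h1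
  rw [hneg] at h
  unfold LRS
  omega

lemma funnel_formula {P : Finset (ℝ × ℝ)} (hY : DistinctY P) :
    Funnel P = (∑ p ∈ P, if FL P p ∪ FR P p = ∅ then 0 else 1)
      + ((∑ p ∈ P, (LRS P p).card) + ∑ p ∈ P, (RLS P p).card) := by
  unfold Funnel
  rw [← Finset.sum_add_distrib, ← Finset.sum_add_distrib]
  apply Finset.sum_congr rfl
  intro p hp
  rw [fContrib_eq hY p, TP_split]

lemma zS_le_sumLR {P : Finset (ℝ × ℝ)} (hX : DistinctX P) (hY : DistinctY P) :
    (ZS P).card ≤ ∑ p ∈ P, (LRS P p).card := by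
  classical
  rw [← Finset.card_sigma]
  apply Finset.card_le_card_of_injOn
    (fun z => ⟨z.1, ((if h : ∃ a, LRtr P z.1 a z.2.2.2 then h.choose else z.1), z.2.2.2)⟩)
  · intro z hz
    have hzr := mem_ZS.1 hz
    have hex : ∃ a, LRtr P z.1 a z.2.2.2 := zrect_LR hX hY hzr
    rw [Finset.mem_coe, Finset.mem_sigma]
    refine ⟨hzr.1, ?_⟩
    dsimp only
    rw [dif_pos hex]
    exact mem_LRS.2 hex.choose_spec
  · intro z hz z' hz' heq
    have hzr := mem_ZS.1 hz
    have hzr' := mem_ZS.1 hz'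
    have hex : ∃ a, LRtr P z.1 a z.2.2.2 := zrect_LR hX hY hzr
    have hex' : ∃ a, LRtr P z'.1 a z'.2.2.2 := zrect_LR hX hY hzr'
    dsimp only at heq
    rw [dif_pos hex, dif_pos hex'] at heq
    obtain ⟨h1, h2⟩ := Sigma.mk.inj_iff.1 heq
    rw [heq_iff_eq] at h2
    have hs : z.2.2.2 = z'.2.2.2 := (Prod.ext_iff.1 h2).2
    obtain ⟨p, q, r, s⟩ := z
    obtain ⟨p', q', r', s'⟩ := z'
    dsimp only at h1 hs hzr hzr' ⊢
    subst h1
    subst hs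
    obtain ⟨hq, hr⟩ := zrect_unique_s hX hY hzr hzr'
    rw [hq, hr]

lemma zS_le_sumRL {P : Finset (ℝ × ℝ)} (hX : DistinctX P) (hY : DistinctY P) :
    (ZS P).card ≤ ∑ p ∈ P, (RLS P p).card := by
  classical
  rw [← Finset.card_sigma]
  apply Finset.card_le_card_of_injOn
    (fun z => ⟨z.1, (z.2.2.1, (if h : ∃ b, RLtr P z.1 z.2.2.1 b then h.choose else z.1))⟩)
  · intro z hz
    have hzr := mem_ZS.1 hz
    have hex : ∃ b, RLtr P z.1 z.2.2.1 b := zrect_RL hX hY hzr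
    rw [Finset.mem_coe, Finset.mem_sigma]
    refine ⟨hzr.1, ?_⟩
    dsimp only
    rw [dif_pos hex]
    exact mem_RLS.2 hex.choose_spec
  · intro z hz z' hz' heq
    have hzr := mem_ZS.1 hz
    have hzr' := mem_ZS.1 hz'
    have hex : ∃ b, RLtr P z.1 z.2.2.1 b := zrect_RL hX hY hzr
    have hex' : ∃ b, RLtr P z'.1 z'.2.2.1 b := zrect_RL hX hY hzr'
    dsimp only at heq
    rw [dif_pos hex, dif_pos hex'] at heq
    obtain ⟨h1, h2⟩ := Sigma.mk.inj_iff.1 heq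
    rw [heq_iff_eq] at h2
    have hrr : z.2.2.1 = z'.2.2.1 := (Prod.ext_iff.1 h2).1
    obtain ⟨p, q, r, s⟩ := z
    obtain ⟨p', q', r', s'⟩ := z'
    dsimp only at h1 hrr hzr hzr' ⊢
    subst h1
    subst hrr
    obtain ⟨hq, hs⟩ := zrect_unique_r hX hY hzr hzr'
    rw [hq, hs]


lemma sumLR_le {P : Finset (ℝ × ℝ)} (hX : DistinctX P) (hY : DistinctY P) :
    ∑ p ∈ P, (LRS P p).card ≤ (ZS P).card + P.card := by
  classical
  have per : ∀ p ∈ P, (LRS P p).card ≤ ((ZS P).filter (fun z => z.1 = p)).card + 1 := by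
    intro p hp
    set G := (LRS P p).filter
      (fun ab => ∃ t ∈ P, p.1 < t.1 ∧ t.1 < ab.2.1 ∧ t.2 < ab.2.2) with hGdef
    set B := (LRS P p).filter
      (fun ab => ¬ ∃ t ∈ P, p.1 < t.1 ∧ t.1 < ab.2.1 ∧ t.2 < ab.2.2) with hBdef
    have hsplit : G.card + B.card = (LRS P p).card :=
      Finset.card_filter_add_card_filter_not _
    have hB : B.card ≤ 1 := by
      rw [Finset.card_le_one]
      rintro ⟨a, b⟩ hab ⟨a', b'⟩ hab'
      obtain ⟨h1, w1⟩ := Finset.mem_filter.1 hab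
      obtain ⟨h2, w2⟩ := Finset.mem_filter.1 hab'
      obtain ⟨ea, eb⟩ := badLR_unique hX hY (mem_LRS.1 h1) (mem_LRS.1 h2) w1 w2
      rw [Prod.ext_iff]
      exact ⟨ea, eb⟩
    have hG : G.card ≤ ((ZS P).filter (fun z => z.1 = p)).card := by
      apply Finset.card_le_card_of_injOn
        (fun ab => if h : ∃ q r, IsZRect P p q r ab.2
          then (p, h.choose, h.choose_spec.choose, ab.2) else (p, p, p, p))
      · rintro ⟨a, b⟩ hab
        obtain ⟨h1, w1⟩ := Finset.mem_filter.1 hab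
        have hLR := mem_LRS.1 h1
        have hex : ∃ q r, IsZRect P p q r b := LR_zrect hX hY hp hLR w1
        dsimp only
        rw [dif_pos hex]
        rw [Finset.mem_coe, Finset.mem_filter]
        exact ⟨mem_ZS.2 hex.choose_spec.choose_spec, rfl⟩
      · rintro ⟨a, b⟩ hab ⟨a', b'⟩ hab' heq
        obtain ⟨h1, w1⟩ := Finset.mem_filter.1 hab
        obtain ⟨h2, w2⟩ := Finset.mem_filter.1 hab'
        have hLR := mem_LRS.1 h1
        have hLR' := mem_LRS.1 h2
        have hex : ∃ q r, IsZRect P p q r b := LR_zrect hX hY hp hLR w1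
        have hex' : ∃ q r, IsZRect P p q r b' := LR_zrect hX hY hp hLR' w2
        dsimp only at heq
        rw [dif_pos hex, dif_pos hex'] at heq
        have hb : b = b' := by
          have := (Prod.ext_iff.1 heq).2
          have := (Prod.ext_iff.1 this).2
          have := (Prod.ext_iff.1 this).2
          exact this
        subst hb
        rw [Prod.ext_iff]
        exact ⟨LR_pred_unique hY hLR hLR', rfl⟩
    omega
  calc ∑ p ∈ P, (LRS P p).card
      ≤ ∑ p ∈ P, (((ZS P).filter (fun z => z.1 = p)).card + 1) :=
        Finset.sum_le_sum per
    _ = (∑ p ∈ P, ((ZS P).filter (fun z => z.1 = p)).card) + P.card := by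
        rw [Finset.sum_add_distrib, Finset.sum_const, smul_eq_mul, mul_one]
    _ = (ZS P).card + P.card := by
        congr 1
        symm
        apply Finset.card_eq_sum_card_fiberwise
        intro z hz
        exact (mem_ZS.1 hz).1

lemma sumRL_le {P : Finset (ℝ × ℝ)} (hX : DistinctX P) (hY : DistinctY P) :
    ∑ p ∈ P, (RLS P p).card ≤ (ZS P).card + P.card := by
  classical
  have per : ∀ p ∈ P, (RLS P p).card ≤ ((ZS P).filter (fun z => z.1 = p)).card + 1 := by
    intro p hp
    set G := (RLS P p).filter
      (fun ab => ∃ t ∈ P, ab.1.1 < t.1 ∧ ab.1.2 < t.2 ∧ t.2 < p.2) with hGdef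
    set B := (RLS P p).filter
      (fun ab => ¬ ∃ t ∈ P, ab.1.1 < t.1 ∧ ab.1.2 < t.2 ∧ t.2 < p.2) with hBdef
    have hsplit : G.card + B.card = (RLS P p).card :=
      Finset.card_filter_add_card_filter_not _
    have hB : B.card ≤ 1 := by
      rw [Finset.card_le_one]
      rintro ⟨a, b⟩ hab ⟨a', b'⟩ hab'
      obtain ⟨h1, w1⟩ := Finset.mem_filter.1 hab
      obtain ⟨h2, w2⟩ := Finset.mem_filter.1 hab'
      obtain ⟨ea, eb⟩ := badRL_unique hX hY (mem_RLS.1 h1) (mem_RLS.1 h2) w1 w2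
      rw [Prod.ext_iff]
      exact ⟨ea, eb⟩
    have hG : G.card ≤ ((ZS P).filter (fun z => z.1 = p)).card := by
      apply Finset.card_le_card_of_injOn
        (fun ab => if h : ∃ s, IsZRect P p ab.2 ab.1 s
          then (p, ab.2, ab.1, h.choose) else (p, p, p, p))
      · rintro ⟨a, b⟩ hab
        obtain ⟨h1, w1⟩ := Finset.mem_filter.1 hab
        have hRL := mem_RLS.1 h1
        have hex : ∃ s, IsZRect P p b a s := RL_zrect hX hY hp hRL w1
        dsimp only
        rw [dif_pos hex]
        rw [Finset.mem_coe, Finset.mem_filter]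
        exact ⟨mem_ZS.2 hex.choose_spec, rfl⟩
      · rintro ⟨a, b⟩ hab ⟨a', b'⟩ hab' heq
        obtain ⟨h1, w1⟩ := Finset.mem_filter.1 hab
        obtain ⟨h2, w2⟩ := Finset.mem_filter.1 hab'
        have hRL := mem_RLS.1 h1
        have hRL' := mem_RLS.1 h2
        have hex : ∃ s, IsZRect P p b a s := RL_zrect hX hY hp hRL w1
        have hex' : ∃ s, IsZRect P p b' a' s := RL_zrect hX hY hp hRL' w2
        dsimp only at heq
        rw [dif_pos hex, dif_pos hex'] at heq
        have h2' := (Prod.ext_iff.1 heq).2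
        have hb : b = b' := (Prod.ext_iff.1 h2').1
        have ha : a = a' := (Prod.ext_iff.1 (Prod.ext_iff.1 h2').2).1
        rw [Prod.ext_iff]
        exact ⟨ha, hb⟩
    omega
  calc ∑ p ∈ P, (RLS P p).card
      ≤ ∑ p ∈ P, (((ZS P).filter (fun z => z.1 = p)).card + 1) :=
        Finset.sum_le_sum per
    _ = (∑ p ∈ P, ((ZS P).filter (fun z => z.1 = p)).card) + P.card := by
        rw [Finset.sum_add_distrib, Finset.sum_const, smul_eq_mul, mul_one]
    _ = (ZS P).card + P.card := by
        congr 1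
        symm
        apply Finset.card_eq_sum_card_fiberwise
        intro z hz
        exact (mem_ZS.1 hz).1

lemma funnel_lower {P : Finset (ℝ × ℝ)} (hX : DistinctX P) (hY : DistinctY P) :
    2 * zRects P ≤ Funnel P := by
  rw [funnel_formula hY, zRects_eq]
  have h1 := zS_le_sumLR hX hY
  have h2 := zS_le_sumRL hX hY
  omega

lemma funnel_upper {P : Finset (ℝ × ℝ)} (hX : DistinctX P) (hY : DistinctY P) :
    Funnel P ≤ 2 * zRects P + 3 * P.card := by
  rw [funnel_formula hY, zRects_eq]
  have h1 := sumLR_le hX hY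
  have h2 := sumRL_le hX hY
  have h3 : (∑ p ∈ P, if FL P p ∪ FR P p = ∅ then 0 else 1) ≤ P.card := by
    calc (∑ p ∈ P, if FL P p ∪ FR P p = ∅ then 0 else 1)
        ≤ ∑ p ∈ P, 1 := Finset.sum_le_sum (fun p _ => by split <;> omega)
      _ = P.card := by rw [Finset.sum_const, smul_eq_mul, mul_one]
  omega


/-! ### Symmetries -/

def rot (v : ℝ × ℝ) : ℝ × ℝ := (-v.1, -v.2)
def xf (v : ℝ × ℝ) : ℝ × ℝ := (-v.1, v.2)

lemma rot_inj : Function.Injective rot := by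
  intro a b h
  unfold rot at h
  rw [Prod.ext_iff] at h ⊢
  obtain ⟨h1, h2⟩ := h
  dsimp only at h1 h2
  constructor <;> linarith

lemma xf_inj : Function.Injective xf := by
  intro a b h
  unfold xf at h
  rw [Prod.ext_iff] at h ⊢
  obtain ⟨h1, h2⟩ := h
  dsimp only at h1 h2
  constructor <;> linarith

lemma distX_rot {P : Finset (ℝ × ℝ)} (hX : DistinctX P) : DistinctX (P.image rot) := by
  intro p' hp' q' hq' h
  obtain ⟨p, hp, rfl⟩ := Finset.mem_image.1 hp'
  obtain ⟨q, hq, rfl⟩ := Finset.mem_image.1 hq'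
  have : p.1 = q.1 := by unfold rot at h; dsimp only at h; linarith
  rw [hX p hp q hq this]

lemma distY_rot {P : Finset (ℝ × ℝ)} (hY : DistinctY P) : DistinctY (P.image rot) := by
  intro p' hp' q' hq' h
  obtain ⟨p, hp, rfl⟩ := Finset.mem_image.1 hp'
  obtain ⟨q, hq, rfl⟩ := Finset.mem_image.1 hq'
  have : p.2 = q.2 := by unfold rot at h; dsimp only at h; linarith
  rw [hY p hp q hq this]

lemma IsZRect_rot {P : Finset (ℝ × ℝ)} {p q r s : ℝ × ℝ} (hz : IsZRect P p q r s) :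
    IsZRect (P.image rot) (rot r) (rot s) (rot p) (rot q) := by
  obtain ⟨hpP, hqP, hrP, hsP, x1, x2, x3, y1, y2, y3, hemp⟩ := hz
  refine ⟨Finset.mem_image_of_mem _ hrP, Finset.mem_image_of_mem _ hsP,
    Finset.mem_image_of_mem _ hpP, Finset.mem_image_of_mem _ hqP,
    ?_, ?_, ?_, ?_, ?_, ?_, ?_⟩
  · show -s.1 < -r.1; linarith
  · show -r.1 < -p.1; linarith
  · show -p.1 < -q.1; linarith
  · show -p.2 < -s.2; linarith
  · show -s.2 < -q.2; linarith
  · show -q.2 < -r.2; linarith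
  · intro t' ht' k1 k2 k3 k4
    obtain ⟨t, htP, rfl⟩ := Finset.mem_image.1 ht'
    have m1 : t.1 ≤ s.1 := by
      have : -s.1 ≤ -t.1 := k1
      linarith
    have m2 : q.1 ≤ t.1 := by
      have : -t.1 ≤ -q.1 := k2
      linarith
    have m3 : t.2 ≤ p.2 := by
      have : -p.2 ≤ -t.2 := k3
      linarith
    have m4 : r.2 ≤ t.2 := by
      have : -t.2 ≤ -r.2 := k4
      linarith
    rcases hemp t htP m2 m1 m4 m3 with h | h | h | h
    · exact Or.inr (Or.inr (Or.inl (by rw [h])))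
    · exact Or.inr (Or.inr (Or.inr (by rw [h])))
    · exact Or.inl (by rw [h])
    · exact Or.inr (Or.inl (by rw [h]))

lemma zRects_le_rot (P : Finset (ℝ × ℝ)) : zRects P ≤ zRects (P.image rot) := by
  rw [zRects_eq, zRects_eq]
  apply Finset.card_le_card_of_injOn
    (fun z => (rot z.2.2.1, rot z.2.2.2, rot z.1, rot z.2.1))
  · intro z hz
    exact mem_ZS.2 (IsZRect_rot (mem_ZS.1 hz))
  · intro z hz z' hz' heq
    obtain ⟨p, q, r, s⟩ := z
    obtain ⟨p', q', r', s'⟩ := z'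
    dsimp only at heq
    rw [Prod.ext_iff] at heq
    obtain ⟨e1, heq⟩ := heq
    rw [Prod.ext_iff] at heq
    obtain ⟨e2, heq⟩ := heq
    rw [Prod.ext_iff] at heq
    obtain ⟨e3, e4⟩ := heq
    dsimp only at e1 e2 e3 e4
    rw [Prod.ext_iff]
    refine ⟨rot_inj e3, ?_⟩
    rw [Prod.ext_iff]
    refine ⟨rot_inj e4, ?_⟩
    rw [Prod.ext_iff]
    exact ⟨rot_inj e1, rot_inj e2⟩

lemma image_rot_rot (P : Finset (ℝ × ℝ)) : (P.image rot).image rot = P := by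
  rw [Finset.image_image]
  have : rot ∘ rot = id := by
    funext v
    simp [rot]
  rw [this, Finset.image_id]

lemma zRects_rot (P : Finset (ℝ × ℝ)) : zRects (P.image rot) = zRects P := by
  apply le_antisymm
  · have := zRects_le_rot (P.image rot)
    rwa [image_rot_rot] at this
  · exact zRects_le_rot P

lemma inRect_xf {p q t : ℝ × ℝ} : inRect (xf p) (xf q) (xf t) ↔ inRect p q t := by
  unfold inRect xf
  dsimp only
  rw [min_neg_neg, max_neg_neg]
  constructor
  · rintro ⟨h1, h2, h3, h4⟩
    exact ⟨by linarith, by linarith, h3, h4⟩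
  · rintro ⟨h1, h2, h3, h4⟩
    exact ⟨by linarith, by linarith, h3, h4⟩

lemma FL_xf (P : Finset (ℝ × ℝ)) (p : ℝ × ℝ) :
    FL (P.image xf) (xf p) = (FR P p).image xf := by
  ext q'
  constructor
  · intro h
    obtain ⟨hq'P, hy, hx, hemp⟩ := mem_FL.1 h
    obtain ⟨q, hqP, rfl⟩ := Finset.mem_image.1 hq'P
    refine Finset.mem_image_of_mem _ (mem_FR.2 ⟨hqP, hy, ?_, ?_⟩)
    · show q.1 > p.1
      have : -q.1 < -p.1 := hx
      linarith
    · intro t htP hrect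
      rcases hemp (xf t) (Finset.mem_image_of_mem _ htP) (inRect_xf.2 hrect) with h' | h'
      · exact Or.inl (xf_inj h')
      · exact Or.inr (xf_inj h')
  · intro h
    obtain ⟨q, hq, rfl⟩ := Finset.mem_image.1 h
    obtain ⟨hqP, hy, hx, hemp⟩ := mem_FR.1 hq
    refine mem_FL.2 ⟨Finset.mem_image_of_mem _ hqP, hy, ?_, ?_⟩
    · show (xf q).1 < (xf p).1
      show -q.1 < -p.1
      linarith
    · intro t' ht' hrect
      obtain ⟨t, htP, rfl⟩ := Finset.mem_image.1 ht'
      rcases hemp t htP (inRect_xf.1 hrect) with h' | h'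
      · exact Or.inl (by rw [h'])
      · exact Or.inr (by rw [h'])

lemma FR_xf (P : Finset (ℝ × ℝ)) (p : ℝ × ℝ) :
    FR (P.image xf) (xf p) = (FL P p).image xf := by
  ext q'
  constructor
  · intro h
    obtain ⟨hq'P, hy, hx, hemp⟩ := mem_FR.1 h
    obtain ⟨q, hqP, rfl⟩ := Finset.mem_image.1 hq'P
    refine Finset.mem_image_of_mem _ (mem_FL.2 ⟨hqP, hy, ?_, ?_⟩)
    · show q.1 < p.1
      have : -q.1 > -p.1 := hx
      linarith
    · intro t htP hrect
      rcases hemp (xf t) (Finset.mem_image_of_mem _ htP) (inRect_xf.2 hrect) with h' | h'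
      · exact Or.inl (xf_inj h')
      · exact Or.inr (xf_inj h')
  · intro h
    obtain ⟨q, hq, rfl⟩ := Finset.mem_image.1 h
    obtain ⟨hqP, hy, hx, hemp⟩ := mem_FL.1 hq
    refine mem_FR.2 ⟨Finset.mem_image_of_mem _ hqP, hy, ?_, ?_⟩
    · show (xf q).1 > (xf p).1
      show -q.1 > -p.1
      linarith
    · intro t' ht' hrect
      obtain ⟨t, htP, rfl⟩ := Finset.mem_image.1 ht'
      rcases hemp t htP (inRect_xf.1 hrect) with h' | h'
      · exact Or.inl (by rw [h'])
      · exact Or.inr (by rw [h'])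

lemma mixValue_comm (L R : Finset ℝ) (hd : ∀ x, ¬(x ∈ L ∧ x ∈ R)) :
    mixValue R L = mixValue L R := by
  classical
  unfold mixValue mix
  rw [Finset.union_comm R L]
  have hmap : ((L ∪ R).sort (· ≤ ·)).map (fun x => decide (x ∈ R)) =
      (((L ∪ R).sort (· ≤ ·)).map (fun x => decide (x ∈ L))).map (fun b => !b) := by
    rw [List.map_map]
    apply List.map_congr_left
    intro x hx
    have hxU : x ∈ L ∪ R := (Finset.mem_sort _).1 hx
    by_cases hxL : x ∈ L
    · have hxR : x ∉ R := fun h => hd x ⟨hxL, h⟩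
      simp [hxL, hxR]
    · have hxR : x ∈ R := (Finset.mem_union.1 hxU).resolve_left hxL
      simp [hxL, hxR]
  rw [hmap, blocks_map_not]

lemma snd_disj {P : Finset (ℝ × ℝ)} (hY : DistinctY P) (p : ℝ × ℝ) :
    ∀ x, ¬(x ∈ (FL P p).image Prod.snd ∧ x ∈ (FR P p).image Prod.snd) := by
  rintro x ⟨hxL, hxR⟩
  obtain ⟨a, ha, ha2⟩ := Finset.mem_image.1 hxL
  obtain ⟨b, hb, hb2⟩ := Finset.mem_image.1 hxR
  have : a = b := hY a (FL_sub_P ha) b (FR_sub_P hb) (by rw [ha2, hb2])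
  subst this
  exact FL_FR_disjoint ha hb

lemma Funnel_xf {P : Finset (ℝ × ℝ)} (hY : DistinctY P) :
    Funnel (P.image xf) = Funnel P := by
  unfold Funnel
  rw [Finset.sum_image (fun x _ y _ h => xf_inj h)]
  apply Finset.sum_congr rfl
  intro p hp
  unfold fContrib
  rw [FL_xf, FR_xf]
  have h1 : ((FR P p).image xf).image Prod.snd = (FR P p).image Prod.snd := by
    rw [Finset.image_image]
    rfl
  have h2 : ((FL P p).image xf).image Prod.snd = (FL P p).image Prod.snd := by
    rw [Finset.image_image]
    rfl
  rw [h1, h2]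
  exact mixValue_comm _ _ (snd_disj hY p)

end FP

theorem funnel_time_reversal (P : Finset (ℝ × ℝ))
    (hX : DistinctX P) (hY : DistinctY P) :
    (Funnel P : ℤ) ≥ (Funnel (P.image (fun v => (v.1, -v.2))) : ℤ) - 4 * P.card := by
  have himg : P.image (fun v => (v.1, -v.2)) = (P.image FP.rot).image FP.xf := by
    rw [Finset.image_image]
    apply Finset.image_congr
    intro v _
    show (v.1, -v.2) = FP.xf (FP.rot v)
    unfold FP.xf FP.rot
    dsimp only
    rw [neg_neg]
  have hXr : DistinctX (P.image FP.rot) := FP.distX_rot hX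
  have hYr : DistinctY (P.image FP.rot) := FP.distY_rot hY
  have step1 : Funnel (P.image (fun v => (v.1, -v.2))) = Funnel (P.image FP.rot) := by
    rw [himg, FP.Funnel_xf hYr]
  have step2 : Funnel (P.image FP.rot) ≤ 2 * zRects (P.image FP.rot)
      + 3 * (P.image FP.rot).card := FP.funnel_upper hXr hYr
  have step3 : zRects (P.image FP.rot) = zRects P := FP.zRects_rot P
  have step4 : (P.image FP.rot).card = P.card :=
    Finset.card_image_of_injective P FP.rot_inj
  have step5 : 2 * zRects P ≤ Funnel P := FP.funnel_lower hX hY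
  have key : Funnel (P.image (fun v => (v.1, -v.2))) ≤ Funnel P + 3 * P.card := by
    rw [step1]
    calc Funnel (P.image FP.rot) ≤ 2 * zRects (P.image FP.rot)
          + 3 * (P.image FP.rot).card := step2
      _ = 2 * zRects P + 3 * P.card := by rw [step3, step4]
      _ ≤ Funnel P + 3 * P.card := by omega
  have hc : (0:ℤ) ≤ (P.card : ℤ) := Int.natCast_nonneg _
  zify at key
  linarith
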